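/- (Bounded spending, symmetric case) Let R = (R_i)_{i∈Ā} be an ε̄-local optimum (with equal weights 1/n) with respect to the endowed valuations v̄_i, with prices p_j as defined. Then p(R_i) ≤ 1 for every agent i ∈ Ā, and consequently p(J) ≤ |Ā|. -/

import Mathlib

open Finset


private lemma marg_sum {J : Type*} [DecidableEq J] (v : Finset J → ℝ)
    (hsub : ∀ S T : Finset J, v (S ∩ T) + v (S ∪ T) ≤ v S + v T)
    (S : Finset J) : ∑ j ∈ S, (v S - v (S.erase j)) ≤ v S - v ∅ := by
  classical
  induction S using Finset.induction_on with
  | empty => simp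
  | @insert a T ha ih =>
    rw [Finset.sum_insert ha]
    have h1 : (insert a T).erase a = T := Finset.erase_insert ha
    have h2 : ∀ j ∈ T, v (insert a T) - v ((insert a T).erase j)
        ≤ v T - v (T.erase j) := by
      intro j hj
      have hja : j ≠ a := fun h => ha (h ▸ hj)
      have hint : (insert a T).erase j ∩ T = T.erase j := by
        ext x; simp only [Finset.mem_inter, Finset.mem_erase, Finset.mem_insert]
        constructor
        · rintro ⟨⟨hxj, _⟩, hxT⟩; exact ⟨hxj, hxT⟩
        · rintro ⟨hxj, hxT⟩; exact ⟨⟨hxj, Or.inr hxT⟩, hxT⟩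
      have huni : (insert a T).erase j ∪ T = insert a T := by
        ext x; simp only [Finset.mem_union, Finset.mem_erase, Finset.mem_insert]
        constructor
        · rintro (⟨_, h⟩ | h); exact h; exact Or.inr h
        · rintro (rfl | h)
          · exact Or.inl ⟨hja.symm, Or.inl rfl⟩
          · exact Or.inr h
      have := hsub ((insert a T).erase j) T
      rw [hint, huni] at this
      linarith
    calc (v (insert a T) - v ((insert a T).erase a))
        + ∑ j ∈ T, (v (insert a T) - v ((insert a T).erase j))
        ≤ (v (insert a T) - v T) + ∑ j ∈ T, (v T - v (T.erase j)) := by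
          rw [h1]
          exact add_le_add le_rfl (Finset.sum_le_sum h2)
      _ ≤ (v (insert a T) - v T) + (v T - v ∅) := by linarith [ih]
      _ = v (insert a T) - v ∅ := by ring

private lemma single_sum {J : Type*} [DecidableEq J] (v : Finset J → ℝ)
    (hmono : ∀ S T : Finset J, S ⊆ T → v S ≤ v T)
    (hsub : ∀ S T : Finset J, v (S ∩ T) + v (S ∪ T) ≤ v S + v T)
    (h0 : v ∅ = 0) (S : Finset J) : v S ≤ ∑ j ∈ S, v {j} := by
  classical
  induction S using Finset.induction_on with
  | empty => simp only [Finset.sum_empty]; rw [h0]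
  | @insert a T ha ih =>
    rw [Finset.sum_insert ha]
    have := hsub T {a}
    have hint : T ∩ {a} = ∅ := by
      rw [Finset.inter_singleton_of_notMem ha]
    have huni : T ∪ {a} = insert a T := by
      ext x; simp [Finset.mem_insert, or_comm]
    rw [hint, huni, h0] at this
    linarith

/-- (Bounded spending, symmetric case.)
For an `ε̄`-local optimum `R` (with equal weights `1/n`) with prices `p`,
`p(R_i) ≤ 1` for every agent `i`, and consequently `p(J) ≤ |Ā|`. -/
theorem bounded_spending_symmetric {J A : Type*} [Fintype J] [DecidableEq J]
    [Fintype A] [Nonempty A]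
    (n : ℕ) (hn1 : 1 ≤ n) (hAn : Fintype.card A ≤ n)
    (v : A → Finset J → ℝ)
    (hmono : ∀ i, ∀ S T : Finset J, S ⊆ T → v i S ≤ v i T)
    (hsubmod : ∀ i, ∀ S T : Finset J, v i (S ∩ T) + v i (S ∪ T) ≤ v i S + v i T)
    (hv0 : ∀ i, v i ∅ = 0) (hvJ : ∀ i, 0 < v i (univ : Finset J))
    (ℓ : A → J) (hℓ : ∀ i, ∀ j : J, v i {j} ≤ v i {ℓ i})
    (vb : A → Finset J → ℝ) (hvb : ∀ i S, vb i S = v i {ℓ i} + v i S)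
    (R : A → Finset J)
    (hdisj : ∀ i k, i ≠ k → Disjoint (R i) (R k))
    (owner : J → A) (howner : ∀ j : J, j ∈ R (owner j))
    (ε' : ℝ) (hε' : 0 ≤ ε')
    (hloc : ∀ i k, i ≠ k → ∀ j ∈ R i,
      (vb i ((R i).erase j) / vb i (R i)) *
        (vb k (R k ∪ {j}) / vb k (R k)) ≤ (1 + ε') ^ n)
    (p : J → ℝ)
    (hp : ∀ j : J, p j =
      vb (owner j) (R (owner j)) / vb (owner j) ((R (owner j)).erase j) - 1) :
    (∀ i : A, ∑ j ∈ R i, p j ≤ 1) ∧ ∑ j : J, p j ≤ (Fintype.card A : ℝ) := by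
  classical
  -- nonnegativity of v
  have hnn : ∀ i (S : Finset J), 0 ≤ v i S := by
    intro i S
    have := hmono i ∅ S (Finset.empty_subset S)
    rw [hv0 i] at this; exact this
  -- positivity of the max singleton value
  have hL : ∀ i, 0 < v i {ℓ i} := by
    intro i
    by_contra h
    push_neg at h
    have h1 : v i (univ : Finset J) ≤ ∑ j : J, v i {j} :=
      single_sum (v i) (hmono i) (hsubmod i) (hv0 i) univ
    have h2 : ∑ j : J, v i {j} ≤ 0 := by
      apply Finset.sum_nonpos
      intro j _
      exact le_trans (hℓ i j) h
    linarith [hvJ i]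
  have hvbpos : ∀ i (S : Finset J), 0 < vb i S := by
    intro i S
    rw [hvb]
    have := hnn i S
    linarith [hL i]
  -- ownership is unique
  have howner_eq : ∀ i, ∀ j ∈ R i, owner j = i := by
    intro i j hj
    by_contra h
    exact (Finset.disjoint_left.mp (hdisj (owner j) i h) (howner j)) hj
  -- the per-agent bound
  have key : ∀ i : A, ∑ j ∈ R i, p j ≤ 1 := by
    intro i
    have hpj : ∀ j ∈ R i, p j = vb i (R i) / vb i ((R i).erase j) - 1 := by
      intro j hj
      rw [hp j, howner_eq i j hj]
    by_cases hS : 0 < v i (R i)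
    · -- per-item bound
      have hbound : ∀ j ∈ R i,
          p j ≤ (v i (R i) - v i ((R i).erase j)) / v i (R i) := by
        intro j hj
        have hden : v i (R i) ≤ vb i ((R i).erase j) := by
          have hsm := hsubmod i ((R i).erase j) {j}
          have hint : (R i).erase j ∩ {j} = ∅ := by
            rw [Finset.inter_singleton_of_notMem (Finset.notMem_erase j _)]
          have huni : (R i).erase j ∪ {j} = R i := by
            ext x
            simp only [Finset.mem_union, Finset.mem_erase, Finset.mem_singleton]
            constructor
            · rintro (⟨_, h⟩ | rfl); exact h; exact hj
            · intro hx
              rcases eq_or_ne x j with rfl | hxj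
              · exact Or.inr rfl
              · exact Or.inl ⟨hxj, hx⟩
          rw [hint, huni, hv0 i] at hsm
          have hℓj := hℓ i j
          rw [hvb]
          linarith
        have hdpos : 0 < vb i ((R i).erase j) := hvbpos i _
        rw [hpj j hj]
        have hnum : vb i (R i) - vb i ((R i).erase j)
            = v i (R i) - v i ((R i).erase j) := by
          rw [hvb, hvb]; ring
        have h1 : vb i (R i) / vb i ((R i).erase j) - 1
            = (vb i (R i) - vb i ((R i).erase j)) / vb i ((R i).erase j) := by
          field_simp
        rw [h1, hnum]
        apply div_le_div_of_nonneg_left _ hS hden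
        · have := hmono i ((R i).erase j) (R i) (Finset.erase_subset j _)
          linarith
      calc ∑ j ∈ R i, p j
          ≤ ∑ j ∈ R i, (v i (R i) - v i ((R i).erase j)) / v i (R i) :=
            Finset.sum_le_sum hbound
        _ = (∑ j ∈ R i, (v i (R i) - v i ((R i).erase j))) / v i (R i) := by
            rw [Finset.sum_div]
        _ ≤ (v i (R i) - v i ∅) / v i (R i) := by
            gcongr
            exact marg_sum (v i) (hsubmod i) (R i)
        _ = 1 := by rw [hv0 i, sub_zero]; field_simp
    · -- v i (R i) = 0 : all prices are zero
      have hz : v i (R i) = 0 := le_antisymm (not_lt.mp hS) (hnn i _)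
      have : ∀ j ∈ R i, p j = 0 := by
        intro j hj
        have hez : v i ((R i).erase j) = 0 :=
          le_antisymm (hz ▸ hmono i _ _ (Finset.erase_subset j _)) (hnn i _)
        rw [hpj j hj, hvb, hvb, hz, hez, add_zero,
          div_self (ne_of_gt (hL i))]
        ring
      rw [Finset.sum_congr rfl this]
      simp
  refine ⟨key, ?_⟩
  have hfib : ∀ i : A, (univ : Finset J).filter (fun j => owner j = i) = R i := by
    intro i
    ext j
    simp only [Finset.mem_filter, Finset.mem_univ, true_and]
    constructor
    · rintro rfl; exact howner j
    · exact howner_eq i j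
  have := Finset.sum_fiberwise (univ : Finset J) owner p
  rw [← this]
  calc ∑ i : A, ∑ j ∈ univ.filter (fun j => owner j = i), p j
      = ∑ i : A, ∑ j ∈ R i, p j := by
        apply Finset.sum_congr rfl
        intro i _
        rw [hfib i]
    _ ≤ ∑ _i : A, (1 : ℝ) := Finset.sum_le_sum (fun i _ => key i)
    _ = (Fintype.card A : ℝ) := by simp
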